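/- Let m, n be positive integers and let α be an n×m complex matrix, viewed as a linear map ℂ^m → ℂ^n. Then the orbit {α · g⁻¹ : g ∈ SL(m,ℂ)} is a closed subset of the space of n×m complex matrices (with its standard topology) if and only if α = 0 or α is injective. -/

import Mathlib

open Matrix Filter Topology

private lemma det_aux {m : ℕ} (v w : Fin m → ℂ) (hwv : w ⬝ᵥ v = 1) (t : ℂ) (ht : t ≠ 0) :
    (t⁻¹ • ((1 : Matrix (Fin m) (Fin m) ℂ) + (t ^ m - 1) • vecMulVec v w)).det = 1 := by
  have h1 : (t ^ m - 1) • vecMulVec v w = vecMulVec ((t ^ m - 1) • v) w := by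
    ext j k
    simp [vecMulVec_apply, smul_eq_mul, mul_assoc]
  rw [Matrix.det_smul, h1, vecMulVec_eq Unit, Matrix.det_one_add_replicateCol_mul_replicateRow,
    dotProduct_smul, hwv]
  simp only [Fintype.card_fin, smul_eq_mul, mul_one]
  have h2 : (1 : ℂ) + (t ^ m - 1) = t ^ m := by ring
  rw [h2, ← mul_pow, inv_mul_cancel₀ ht, one_pow]

/-- For a nonzero-size complex `n × m` matrix `α`, the orbit
`{α g⁻¹ : g ∈ SL(m, ℂ)}` is closed in the space of `n × m` complex matrices
(with its standard topology) if and only if `α = 0` or `α` is injective as a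
linear map `ℂ^m → ℂ^n`. -/
theorem statement0 (m n : ℕ) (hm : 0 < m) (hn : 0 < n)
    (α : Matrix (Fin n) (Fin m) ℂ) :
    IsClosed {A : Matrix (Fin n) (Fin m) ℂ |
        ∃ g : Matrix.SpecialLinearGroup (Fin m) ℂ,
          A = α * (↑(g⁻¹) : Matrix (Fin m) (Fin m) ℂ)} ↔
      (α = 0 ∨ Function.Injective α.mulVecLin) := by
  constructor
  · intro hcl
    by_cases hα : α = 0
    · exact Or.inl hα
    right
    rw [← LinearMap.ker_eq_bot]
    by_contra hker
    obtain ⟨v, hv, hv0⟩ := Submodule.exists_mem_ne_zero_of_ne_bot hker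
    have hαv : α.mulVec v = 0 := by
      simpa [Matrix.mulVecLin_apply] using LinearMap.mem_ker.mp hv
    obtain ⟨i, hi⟩ : ∃ i, v i ≠ 0 := by
      by_contra h; push_neg at h; exact hv0 (funext h)
    set w : Fin m → ℂ := Pi.single i (v i)⁻¹ with hw
    have hwv : w ⬝ᵥ v = 1 := by
      simp [hw, dotProduct, Pi.single_apply, inv_mul_cancel₀ hi]
    have hrank1 : α * vecMulVec v w = 0 := by
      ext j k
      have : (α * vecMulVec v w) j k = (α.mulVec v) j * w k := by
        simp [Matrix.mul_apply, vecMulVec_apply, Matrix.mulVec, dotProduct,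
          Finset.sum_mul, mul_assoc]
      rw [this, hαv]
      simp
    -- the sequence (1/k) • α lies in the orbit for k ≥ 1
    have hmem : ∀ k : ℕ, 1 ≤ k → ((k : ℂ))⁻¹ • α ∈
        {A : Matrix (Fin n) (Fin m) ℂ | ∃ g : Matrix.SpecialLinearGroup (Fin m) ℂ,
          A = α * (↑(g⁻¹) : Matrix (Fin m) (Fin m) ℂ)} := by
      intro k hk
      have ht : ((k : ℂ)) ≠ 0 := by
        exact_mod_cast Nat.cast_ne_zero.mpr (by omega)
      set t : ℂ := (k : ℂ)
      set M : Matrix (Fin m) (Fin m) ℂ :=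
        t⁻¹ • ((1 : Matrix (Fin m) (Fin m) ℂ) + (t ^ m - 1) • vecMulVec v w) with hM
      have hdet : M.det = 1 := det_aux v w hwv t ht
      refine ⟨(show Matrix.SpecialLinearGroup (Fin m) ℂ from ⟨M, hdet⟩)⁻¹, ?_⟩
      rw [inv_inv]
      show t⁻¹ • α = α * M
      rw [hM, Matrix.mul_smul, Matrix.mul_add, Matrix.mul_one, Matrix.mul_smul, hrank1]
      simp
    have htend : Tendsto (fun k : ℕ => ((k : ℂ))⁻¹ • α) atTop (𝓝 0) := by
      have h1 : Tendsto (fun k : ℕ => ((k : ℂ))⁻¹) atTop (𝓝 0) := by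
        have h2 : Tendsto (fun k : ℕ => ((k : ℝ))⁻¹) atTop (𝓝 0) :=
          tendsto_inv_atTop_zero.comp tendsto_natCast_atTop_atTop
        have h3 := (Complex.continuous_ofReal.tendsto 0).comp h2
        simpa [Function.comp_def] using h3
      simpa using h1.smul_const α
    have h0 : (0 : Matrix (Fin n) (Fin m) ℂ) ∈
        {A : Matrix (Fin n) (Fin m) ℂ | ∃ g : Matrix.SpecialLinearGroup (Fin m) ℂ,
          A = α * (↑(g⁻¹) : Matrix (Fin m) (Fin m) ℂ)} := by
      refine hcl.mem_of_tendsto htend ?_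
      filter_upwards [eventually_ge_atTop 1] with k hk using hmem k hk
    obtain ⟨g, hg⟩ := h0
    apply hα
    calc α = α * ((↑(g⁻¹) : Matrix (Fin m) (Fin m) ℂ) * (↑g : Matrix (Fin m) (Fin m) ℂ)) := by
            rw [← Matrix.SpecialLinearGroup.coe_mul, inv_mul_cancel]
            simp
      _ = (α * (↑(g⁻¹) : Matrix (Fin m) (Fin m) ℂ)) * (↑g : Matrix (Fin m) (Fin m) ℂ) := by rw [Matrix.mul_assoc]
      _ = (0 : Matrix (Fin n) (Fin m) ℂ) * (↑g : Matrix (Fin m) (Fin m) ℂ) := by rw [← hg]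
      _ = 0 := by simp
  · rintro (rfl | hinj)
    · have hset : {A : Matrix (Fin n) (Fin m) ℂ |
          ∃ g : Matrix.SpecialLinearGroup (Fin m) ℂ,
            A = (0 : Matrix (Fin n) (Fin m) ℂ) * (↑(g⁻¹) : Matrix (Fin m) (Fin m) ℂ)} = {0} := by
        ext A
        constructor
        · rintro ⟨g, rfl⟩; simp
        · rintro rfl; exact ⟨1, by simp⟩
      rw [hset]
      exact isClosed_singleton
    · have hker : LinearMap.ker α.mulVecLin = ⊥ := LinearMap.ker_eq_bot.mpr hinj
      obtain ⟨gl, hgl⟩ := LinearMap.exists_leftInverse_of_injective α.mulVecLin hker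
      set β := LinearMap.toMatrix' gl with hβ
      have hβα : β * α = 1 := by
        have h := congrArg LinearMap.toMatrix' hgl
        rwa [LinearMap.toMatrix'_comp, ← Matrix.toLin'_apply', LinearMap.toMatrix'_toLin',
          LinearMap.toMatrix'_id] at h
      have hset : {A : Matrix (Fin n) (Fin m) ℂ |
          ∃ g : Matrix.SpecialLinearGroup (Fin m) ℂ,
            A = α * (↑(g⁻¹) : Matrix (Fin m) (Fin m) ℂ)} =
          {A : Matrix (Fin n) (Fin m) ℂ | α * (β * A) = A} ∩
          {A : Matrix (Fin n) (Fin m) ℂ | (β * A).det = 1} := by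
        ext A
        constructor
        · rintro ⟨g, rfl⟩
          have h1 : β * (α * (↑(g⁻¹) : Matrix (Fin m) (Fin m) ℂ)) = ↑(g⁻¹) := by
            rw [← Matrix.mul_assoc, hβα, Matrix.one_mul]
          exact ⟨by simp only [Set.mem_setOf_eq, h1], by
            simp only [Set.mem_setOf_eq, h1]; exact (g⁻¹).prop⟩
        · rintro ⟨h1, h2⟩
          refine ⟨(show Matrix.SpecialLinearGroup (Fin m) ℂ from ⟨β * A, h2⟩)⁻¹, ?_⟩
          rw [inv_inv]
          exact h1.symm
      rw [hset]
      exact (isClosed_eq (continuous_const.matrix_mul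
          (continuous_const.matrix_mul continuous_id)) continuous_id).inter
        (isClosed_eq ((continuous_const.matrix_mul continuous_id).matrix_det) continuous_const)
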